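/- Let X be a continuous random variable on [-1,1] whose density f_X has an absolutely convergent Chebyshev series f_X(x) = ∑_{l=0}^∞ μ_l T_l(x). Then as k → ∞, T_k(X) converges in distribution to the random variable Γ with density f_Γ(z) = 1/(π√(1-z²)) on (-1,1). -/

import Mathlib

open Real MeasureTheory Set Filter Polynomial intervalIntegral

/-- The arcsine density `1/(π √(1-z²))` on `(-1,1)`, as an `ℝ≥0∞`-valued function. -/
noncomputable def arcsineDensity : ℝ → ENNReal :=
  Set.indicator (Set.Ioo (-1 : ℝ) 1)
    (fun z => ENNReal.ofReal (1 / (π * Real.sqrt (1 - z ^ 2))))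


noncomputable def chebH (z u : ℝ) : ℝ := if Real.cos u ≤ z then 1 else 0

noncomputable def chebM (z : ℝ) : ℝ := 1 - Real.arccos z / π

lemma chebH_nonneg (z u : ℝ) : 0 ≤ chebH z u := by
  unfold chebH; split <;> norm_num

lemma chebH_le_one (z u : ℝ) : chebH z u ≤ 1 := by
  unfold chebH; split <;> norm_num

lemma abs_chebH_le (z u : ℝ) : |chebH z u| ≤ 1 := by
  rw [abs_le]; exact ⟨by linarith [chebH_nonneg z u], chebH_le_one z u⟩

lemma chebM_nonneg (z : ℝ) : 0 ≤ chebM z := by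
  have h1 := Real.arccos_le_pi z
  have : Real.arccos z / π ≤ 1 := by
    rw [div_le_one Real.pi_pos]; exact h1
  simp only [chebM]; linarith

lemma chebM_le_one (z : ℝ) : chebM z ≤ 1 := by
  have h := Real.arccos_nonneg z
  have : 0 ≤ Real.arccos z / π := div_nonneg h Real.pi_pos.le
  simp only [chebM]; linarith

lemma abs_chebH_sub_chebM_le (z u : ℝ) : |chebH z u - chebM z| ≤ 1 := by
  rw [abs_le]
  constructor
  · linarith [chebH_nonneg z u, chebM_le_one z]
  · linarith [chebH_le_one z u, chebM_nonneg z]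

lemma measurable_chebH (z : ℝ) : Measurable (chebH z) := by
  unfold chebH
  exact Measurable.ite (measurableSet_le Real.continuous_cos.measurable measurable_const)
    measurable_const measurable_const

lemma periodic_chebH (z : ℝ) : Function.Periodic (chebH z) (2 * π) := by
  intro u; unfold chebH; rw [Real.cos_add_two_pi]

lemma intervalIntegrable_of_bounded {φ : ℝ → ℝ} (hm : Measurable φ) {C : ℝ}
    (hb : ∀ u, |φ u| ≤ C) (a b : ℝ) : IntervalIntegrable φ volume a b := by
  rw [intervalIntegrable_iff]
  refine Integrable.mono' (g := fun _ => C) ?_ hm.aestronglyMeasurable ?_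
  · exact integrableOn_const measure_Ioc_lt_top.ne
  · exact Filter.Eventually.of_forall fun x => by simpa using hb x

lemma intervalIntegrable_chebH (z c a b : ℝ) :
    IntervalIntegrable (fun u => chebH z (c * u)) volume a b :=
  intervalIntegrable_of_bounded ((measurable_chebH z).comp (measurable_const_mul c))
    (fun u => abs_chebH_le z _) a b

/-- integral of the indicator over the symmetric period `[-π, π]`. -/
lemma integral_chebH_base (z : ℝ) :
    ∫ u in (-π)..π, chebH z u = 2 * π - 2 * Real.arccos z := by
  rcases le_or_gt 1 z with hz | hz
  · have h1 : ∀ u, chebH z u = 1 := fun u => if_pos ((Real.cos_le_one u).trans hz)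
    simp only [h1, Real.arccos_eq_zero.2 hz]
    rw [intervalIntegral.integral_const]
    simp; ring
  rcases lt_or_ge z (-1) with hz' | hz'
  · have h0 : ∀ u, chebH z u = 0 := fun u => if_neg (by linarith [Real.neg_one_le_cos u])
    have hπ : Real.arccos z = π := Real.arccos_eq_pi.2 (by linarith)
    simp only [h0, hπ]
    simp
  -- main case : -1 ≤ z < 1
  set c := Real.arccos z with hc
  have hc0 : 0 < c := Real.arccos_pos.2 hz
  have hcπ : c ≤ π := Real.arccos_le_pi z
  have hcos : Real.cos c = z := Real.cos_arccos hz' hz.le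
  have hset : Ioc (-π) π ∩ {u | Real.cos u ≤ z} = Ioc (-π) (-c) ∪ Icc c π := by
    ext u
    simp only [mem_inter_iff, mem_Ioc, mem_setOf_eq, mem_union, mem_Icc]
    constructor
    · rintro ⟨⟨h1, h2⟩, h3⟩
      rcases le_or_gt 0 u with hu | hu
      · right
        refine ⟨?_, h2⟩
        by_contra hcon
        push_neg at hcon
        have := Real.strictAntiOn_cos (a := u) (b := c) ⟨hu, h2⟩ ⟨hc0.le, hcπ⟩ hcon
        rw [hcos] at this; linarith
      · left
        refine ⟨h1, ?_⟩
        have hcu : Real.cos (-u) ≤ z := by rw [Real.cos_neg]; exact h3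
        have : c ≤ -u := by
          by_contra hcon
          push_neg at hcon
          have := Real.strictAntiOn_cos (a := -u) (b := c) ⟨by linarith, by linarith⟩
            ⟨hc0.le, hcπ⟩ hcon
          rw [hcos] at this; linarith
        linarith
    · rintro (⟨h1, h2⟩ | ⟨h1, h2⟩)
      · have h3 : Real.cos (-u) ≤ Real.cos c := by
          apply Real.cos_le_cos_of_nonneg_of_le_pi hc0.le (by linarith) (by linarith)
        rw [Real.cos_neg] at h3
        exact ⟨⟨h1, by linarith [hc0]⟩, by rwa [hcos] at h3⟩
      · have h3 : Real.cos u ≤ Real.cos c :=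
          Real.cos_le_cos_of_nonneg_of_le_pi hc0.le h2 h1
        exact ⟨⟨by linarith [hc0, Real.pi_pos], h2⟩, by rwa [hcos] at h3⟩
  have hHind : ∀ u, chebH z u = Set.indicator {u | Real.cos u ≤ z} (fun _ => (1:ℝ)) u := by
    intro u
    by_cases h : Real.cos u ≤ z
    · simp [chebH, Set.indicator, h]
    · simp [chebH, Set.indicator, h]
  have hmS : MeasurableSet {u : ℝ | Real.cos u ≤ z} :=
    measurableSet_le Real.continuous_cos.measurable measurable_const
  rw [intervalIntegral.integral_of_le (by linarith [Real.pi_pos])]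
  calc ∫ u in Ioc (-π) π, chebH z u
      = ∫ u in Ioc (-π) π, Set.indicator {u | Real.cos u ≤ z} (fun _ => (1:ℝ)) u := by
        exact setIntegral_congr_fun measurableSet_Ioc fun u _ => hHind u
    _ = ∫ u in Ioc (-π) π ∩ {u | Real.cos u ≤ z}, (1:ℝ) := setIntegral_indicator hmS
    _ = (volume (Ioc (-π) π ∩ {u | Real.cos u ≤ z})).toReal • (1:ℝ) := by
        rw [setIntegral_const]; rfl
    _ = 2 * π - 2 * Real.arccos z := by
        rw [hset]
        have hdisj : Disjoint (Ioc (-π) (-c)) (Icc c π) := by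
          apply Set.disjoint_left.2
          rintro u ⟨_, h2⟩ ⟨h3, _⟩
          linarith
        rw [measure_union hdisj measurableSet_Icc]
        rw [Real.volume_Ioc, Real.volume_Icc]
        rw [ENNReal.toReal_add ENNReal.ofReal_ne_top ENNReal.ofReal_ne_top]
        rw [ENNReal.toReal_ofReal (by linarith), ENNReal.toReal_ofReal (by linarith)]
        simp only [smul_eq_mul, mul_one]
        ring

lemma integral_chebH_period (z a : ℝ) :
    ∫ u in a..(a + 2 * π), chebH z u = 2 * π - 2 * Real.arccos z := by
  have := (periodic_chebH z).intervalIntegral_add_eq a (-π)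
  rw [this]
  have : -π + 2 * π = π := by ring
  rw [this, integral_chebH_base]

noncomputable def chebPhi (z u : ℝ) : ℝ := ∫ t in (0:ℝ)..u, (chebH z t - chebM z)

lemma intervalIntegrable_chebHM (z a b : ℝ) :
    IntervalIntegrable (fun t => chebH z t - chebM z) volume a b :=
  intervalIntegrable_of_bounded ((measurable_chebH z).sub measurable_const)
    (fun u => abs_chebH_sub_chebM_le z u) a b

lemma continuous_chebPhi (z : ℝ) : Continuous (chebPhi z) :=
  intervalIntegral.continuous_primitive (fun a b => intervalIntegrable_chebHM z a b) 0

lemma integral_chebHM_period (z a : ℝ) :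
    ∫ u in a..(a + 2 * π), (chebH z u - chebM z) = 0 := by
  rw [intervalIntegral.integral_sub (intervalIntegrable_chebH z 1 a _ |>.congr ?_)
    (intervalIntegrable_const)]
  · rw [show (∫ u in a..(a + 2*π), chebH z u) = 2 * π - 2 * Real.arccos z from
      integral_chebH_period z a]
    rw [intervalIntegral.integral_const]
    simp only [add_sub_cancel_left, smul_eq_mul, chebM]
    field_simp
    ring
  · intro u _; simp only [one_mul]

lemma periodic_chebPhi (z : ℝ) : Function.Periodic (chebPhi z) (2 * π) := by
  intro u
  unfold chebPhi
  have hadd : (∫ t in (0:ℝ)..u, (chebH z t - chebM z)) +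
      (∫ t in u..(u + 2*π), (chebH z t - chebM z)) =
      ∫ t in (0:ℝ)..(u + 2*π), (chebH z t - chebM z) :=
    intervalIntegral.integral_add_adjacent_intervals (intervalIntegrable_chebHM z 0 u)
      (intervalIntegrable_chebHM z u _)
  rw [← hadd, integral_chebHM_period z u, add_zero]

lemma abs_chebPhi_le (z u : ℝ) : |chebPhi z u| ≤ 2 * π := by
  have hπ := Real.pi_pos
  have hper := periodic_chebPhi z
  set n : ℤ := ⌊u / (2 * π)⌋ with hn
  have hv := hper.sub_int_mul_eq (x := u) n
  set v : ℝ := u - n * (2 * π) with hv'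
  have h2π : (0:ℝ) < 2 * π := by linarith
  have h2 : (n:ℝ) * (2 * π) ≤ u := by
    rw [hn]
    have := (le_div_iff₀ h2π).mp (Int.floor_le (u / (2 * π)))
    linarith
  have h3 : u < ((n:ℝ) + 1) * (2 * π) := by
    rw [hn]
    have h4 : u / (2 * π) < (⌊u / (2 * π)⌋ : ℝ) + 1 := Int.lt_floor_add_one _
    have := (div_lt_iff₀ h2π).mp h4
    push_cast
    linarith
  have hv0 : 0 ≤ v := by rw [hv']; linarith
  have hv2 : v ≤ 2 * π := by rw [hv']; nlinarith
  rw [← hv]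
  have : ‖∫ t in (0:ℝ)..v, (chebH z t - chebM z)‖ ≤ 1 * |v - 0| :=
    intervalIntegral.norm_integral_le_of_norm_le_const
      (fun t _ => by simpa using abs_chebH_sub_chebM_le z t)
  rw [Real.norm_eq_abs] at this
  calc |chebPhi z v| ≤ 1 * |v - 0| := this
    _ ≤ 2 * π := by rw [sub_zero, one_mul, abs_of_nonneg hv0]; exact hv2

lemma hasDerivAt_chebPhi (z : ℝ) {u : ℝ} (hu : Real.cos u ≠ z) :
    HasDerivAt (chebPhi z) (chebH z u - chebM z) u := by
  apply intervalIntegral.integral_hasDerivAt_right (intervalIntegrable_chebHM z 0 u)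
    (((measurable_chebH z).sub measurable_const).stronglyMeasurable.stronglyMeasurableAtFilter)
  rcases lt_or_gt_of_ne hu with h | h
  · have hev : (fun t => chebH z t - chebM z) =ᶠ[nhds u] (fun _ => 1 - chebM z) := by
      have : ∀ᶠ t in nhds u, Real.cos t < z :=
        (isOpen_lt Real.continuous_cos continuous_const).eventually_mem h
      filter_upwards [this] with t ht
      rw [show chebH z t = 1 from if_pos ht.le]
    exact hev.continuousAt
  · have hev : (fun t => chebH z t - chebM z) =ᶠ[nhds u] (fun _ => 0 - chebM z) := by
      have : ∀ᶠ t in nhds u, z < Real.cos t :=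
        (isOpen_lt continuous_const Real.continuous_cos).eventually_mem h
      filter_upwards [this] with t ht
      rw [show chebH z t = 0 from if_neg (not_le.2 ht)]
    exact hev.continuousAt

lemma countable_cos_level (z : ℝ) : {u : ℝ | Real.cos u = z}.Countable := by
  rcases le_or_gt z 1 with hz1 | hz1
  · rcases le_or_gt (-1) z with hz2 | hz2
    · set c := Real.arccos z with hc
      have hcos : Real.cos c = z := Real.cos_arccos hz2 hz1
      have hsub : {u : ℝ | Real.cos u = z} ⊆
          (Set.range fun k : ℤ => 2 * k * π + c) ∪ (Set.range fun k : ℤ => 2 * k * π - c) := by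
        intro u hu
        have : Real.cos c = Real.cos u := by rw [hcos]; exact hu.symm
        rcases Real.cos_eq_cos_iff.1 this with ⟨k, hk | hk⟩
        · left; exact ⟨k, hk.symm⟩
        · right
          exact ⟨k, hk.symm⟩
      exact Set.Countable.mono hsub
        ((Set.countable_range _).union (Set.countable_range _))
    · have hemp : {u : ℝ | Real.cos u = z} = ∅ := by
        ext u; simp only [mem_setOf_eq, mem_empty_iff_false, iff_false]
        intro h; linarith [Real.neg_one_le_cos u, h ▸ Real.neg_one_le_cos u]
      rw [hemp]; exact Set.countable_empty
  · have hemp : {u : ℝ | Real.cos u = z} = ∅ := by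
      ext u; simp only [mem_setOf_eq, mem_empty_iff_false, iff_false]
      intro h; have := Real.cos_le_one u; rw [h] at this; linarith
    rw [hemp]; exact Set.countable_empty

lemma abs_mul_le_one' {a b : ℝ} (h1 : |a| ≤ 1) (h2 : |b| ≤ 1) : |a * b| ≤ 1 := by
  rw [abs_mul]
  nlinarith [abs_nonneg a, abs_nonneg b]

noncomputable def chebPsi (l : ℕ) (θ : ℝ) : ℝ := Real.cos (l * θ) * Real.sin θ

noncomputable def chebPsi' (l : ℕ) (θ : ℝ) : ℝ :=
  -Real.sin (l * θ) * l * Real.sin θ + Real.cos (l * θ) * Real.cos θ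

lemma continuous_chebPsi (l : ℕ) : Continuous (chebPsi l) := by
  unfold chebPsi; fun_prop

lemma continuous_chebPsi' (l : ℕ) : Continuous (chebPsi' l) := by
  unfold chebPsi'; fun_prop

lemma abs_chebPsi_le (l : ℕ) (θ : ℝ) : |chebPsi l θ| ≤ 1 := by
  unfold chebPsi
  exact abs_mul_le_one' (Real.abs_cos_le_one _) (Real.abs_sin_le_one _)

lemma abs_chebPsi'_le (l : ℕ) (θ : ℝ) : |chebPsi' l θ| ≤ (l:ℝ) + 1 := by
  unfold chebPsi'
  have h1 : |(-Real.sin (l * θ) * l) * Real.sin θ| ≤ (l:ℝ) := by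
    rw [abs_mul, abs_mul, abs_neg]
    have hs := Real.abs_sin_le_one ((l:ℝ) * θ)
    have hs' := Real.abs_sin_le_one θ
    have h0 : |(l:ℝ)| = (l:ℝ) := abs_of_nonneg (Nat.cast_nonneg l)
    rw [h0]
    have hL : (0:ℝ) ≤ (l:ℝ) := Nat.cast_nonneg l
    have e1 : |Real.sin ((l:ℝ) * θ)| * (l:ℝ) ≤ (l:ℝ) := by nlinarith
    have e2 : |Real.sin ((l:ℝ) * θ)| * (l:ℝ) * |Real.sin θ| ≤ |Real.sin ((l:ℝ) * θ)| * (l:ℝ) :=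
      mul_le_of_le_one_right (by positivity) hs'
    linarith
  have h2 : |Real.cos ((l:ℝ) * θ) * Real.cos θ| ≤ 1 := by
    exact abs_mul_le_one' (Real.abs_cos_le_one _) (Real.abs_cos_le_one _)
  calc |(-Real.sin (l*θ) * l) * Real.sin θ + Real.cos (l*θ) * Real.cos θ|
      ≤ |(-Real.sin (l*θ) * l) * Real.sin θ| + |Real.cos (l*θ) * Real.cos θ| := abs_add_le _ _
    _ ≤ (l:ℝ) + 1 := add_le_add h1 h2

lemma hasDerivAt_chebPsi (l : ℕ) (θ : ℝ) : HasDerivAt (chebPsi l) (chebPsi' l θ) θ := by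
  have h0 : HasDerivAt (fun θ : ℝ => (l:ℝ) * θ) (l:ℝ) θ := by
    simpa using (hasDerivAt_id θ).const_mul (l:ℝ)
  have h1 : HasDerivAt (fun θ : ℝ => Real.cos ((l:ℝ) * θ)) (-Real.sin ((l:ℝ)*θ) * l) θ :=
    h0.cos
  unfold chebPsi chebPsi'
  exact h1.mul (Real.hasDerivAt_sin θ)

noncomputable def chebA (z : ℝ) (k l : ℕ) : ℝ :=
  ∫ θ in (0:ℝ)..π, chebH z ((k:ℝ) * θ) * chebPsi l θ

noncomputable def chebI (l : ℕ) : ℝ := ∫ θ in (0:ℝ)..π, chebPsi l θ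

lemma abs_chebA_le (z : ℝ) (k l : ℕ) : |chebA z k l| ≤ π := by
  have h : ‖∫ θ in (0:ℝ)..π, chebH z ((k:ℝ) * θ) * chebPsi l θ‖ ≤ 1 * |π - 0| := by
    apply intervalIntegral.norm_integral_le_of_norm_le_const
    intro θ _
    rw [Real.norm_eq_abs]
    exact abs_mul_le_one' (abs_chebH_le _ _) (abs_chebPsi_le _ _)
  rw [Real.norm_eq_abs, sub_zero, abs_of_pos Real.pi_pos, one_mul] at h
  exact h

lemma intervalIntegrable_chebH_mul_psi (z : ℝ) (k l : ℕ) (a b : ℝ) :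
    IntervalIntegrable (fun θ => chebH z ((k:ℝ) * θ) * chebPsi l θ) volume a b := by
  apply intervalIntegrable_of_bounded (C := 1)
  · exact (((measurable_chebH z).comp (measurable_const_mul (k:ℝ))).mul
      (continuous_chebPsi l).measurable)
  · intro u
    exact abs_mul_le_one' (abs_chebH_le _ _) (abs_chebPsi_le _ _)

lemma chebA_key (z : ℝ) {k : ℕ} (hk : 1 ≤ k) (l : ℕ) :
    |chebA z k l - chebM z * chebI l| ≤ 2 * π ^ 2 * ((l:ℝ) + 1) / k := by
  have hπ := Real.pi_pos
  have hk0 : (0:ℝ) < k := by exact_mod_cast hk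
  set G : ℝ → ℝ := fun θ => (k:ℝ)⁻¹ * chebPhi z ((k:ℝ) * θ) * chebPsi l θ with hG
  set G' : ℝ → ℝ := fun θ =>
    (chebH z ((k:ℝ) * θ) - chebM z) * chebPsi l θ +
      (k:ℝ)⁻¹ * chebPhi z ((k:ℝ) * θ) * chebPsi' l θ with hG'
  have hE : ({θ : ℝ | Real.cos ((k:ℝ) * θ) = z}).Countable := by
    have hinj : Function.Injective (fun θ : ℝ => (k:ℝ) * θ) :=
      fun a b hab => mul_left_cancel₀ hk0.ne' hab
    exact (countable_cos_level z).preimage hinj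
  have hcontPhiK : Continuous fun θ : ℝ => chebPhi z ((k:ℝ) * θ) :=
    (continuous_chebPhi z).comp (continuous_const.mul continuous_id)
  have hderiv : ∀ θ ∈ Ioo (0:ℝ) π \ {θ : ℝ | Real.cos ((k:ℝ) * θ) = z},
      HasDerivAt G (G' θ) θ := by
    rintro θ ⟨_, hθ⟩
    have hne : Real.cos ((k:ℝ) * θ) ≠ z := hθ
    have h1 : HasDerivAt (fun θ : ℝ => chebPhi z ((k:ℝ) * θ))
        ((chebH z ((k:ℝ) * θ) - chebM z) * k) θ := by
      have h0 : HasDerivAt (fun θ : ℝ => (k:ℝ) * θ) (k:ℝ) θ := by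
        simpa using (hasDerivAt_id θ).const_mul (k:ℝ)
      have := (hasDerivAt_chebPhi z hne).comp θ h0
      exact this
    have h2 : HasDerivAt (fun θ : ℝ => (k:ℝ)⁻¹ * chebPhi z ((k:ℝ) * θ))
        (chebH z ((k:ℝ) * θ) - chebM z) θ := by
      have := h1.const_mul (k:ℝ)⁻¹
      rw [show (chebH z ((k:ℝ) * θ) - chebM z) = (k:ℝ)⁻¹ * ((chebH z ((k:ℝ) * θ) - chebM z) * k) by
        rw [mul_comm (chebH z ((k:ℝ) * θ) - chebM z) (k:ℝ), ← mul_assoc, inv_mul_cancel₀ hk0.ne', one_mul]]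
      exact this
    exact h2.mul (hasDerivAt_chebPsi l θ)
  have hcontG : Continuous G :=
    (continuous_const.mul hcontPhiK).mul (continuous_chebPsi l)
  have hint1 : IntervalIntegrable
      (fun θ => (chebH z ((k:ℝ) * θ) - chebM z) * chebPsi l θ) volume 0 π := by
    apply intervalIntegrable_of_bounded (C := 1)
    · exact (((measurable_chebH z).comp (measurable_const_mul (k:ℝ))).sub
        measurable_const).mul (continuous_chebPsi l).measurable
    · intro u
      exact abs_mul_le_one' (abs_chebH_sub_chebM_le _ _) (abs_chebPsi_le _ _)
  have hint2 : IntervalIntegrable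
      (fun θ => (k:ℝ)⁻¹ * chebPhi z ((k:ℝ) * θ) * chebPsi' l θ) volume 0 π :=
    (((continuous_const.mul hcontPhiK).mul (continuous_chebPsi' l))).intervalIntegrable 0 π
  have hintG' : IntervalIntegrable G' volume 0 π := hint1.add hint2
  have hftc : ∫ θ in (0:ℝ)..π, G' θ = G π - G 0 :=
    MeasureTheory.integral_eq_of_hasDerivAt_off_countable_of_le G G' hπ.le hE
      hcontG.continuousOn hderiv hintG'
  have hG0 : G 0 = 0 := by simp [hG, chebPsi]
  have hGπ : G π = 0 := by simp [hG, chebPsi, Real.sin_pi]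
  have hsplit : (∫ θ in (0:ℝ)..π, (chebH z ((k:ℝ) * θ) - chebM z) * chebPsi l θ) +
      (∫ θ in (0:ℝ)..π, (k:ℝ)⁻¹ * chebPhi z ((k:ℝ) * θ) * chebPsi' l θ) = 0 := by
    rw [← intervalIntegral.integral_add hint1 hint2]
    rw [show (fun θ => (chebH z ((k:ℝ)*θ) - chebM z) * chebPsi l θ +
      (k:ℝ)⁻¹ * chebPhi z ((k:ℝ)*θ) * chebPsi' l θ) = G' from rfl] at *
    rw [hftc, hG0, hGπ, sub_zero]
  have hAeq : chebA z k l - chebM z * chebI l =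
      ∫ θ in (0:ℝ)..π, (chebH z ((k:ℝ) * θ) - chebM z) * chebPsi l θ := by
    have hmint : IntervalIntegrable (fun θ => chebM z * chebPsi l θ) volume 0 π :=
      (continuous_const.mul (continuous_chebPsi l)).intervalIntegrable 0 π
    rw [intervalIntegral.integral_congr
      (g := fun θ => chebH z ((k:ℝ)*θ) * chebPsi l θ - chebM z * chebPsi l θ)
      (fun θ _ => by ring)]
    rw [intervalIntegral.integral_sub (intervalIntegrable_chebH_mul_psi z k l 0 π) hmint]
    rw [intervalIntegral.integral_const_mul]
    rfl
  have hbound : |∫ θ in (0:ℝ)..π, (k:ℝ)⁻¹ * chebPhi z ((k:ℝ) * θ) * chebPsi' l θ| ≤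
      (k:ℝ)⁻¹ * (2 * π) * ((l:ℝ) + 1) * π := by
    have h : ‖∫ θ in (0:ℝ)..π, (k:ℝ)⁻¹ * chebPhi z ((k:ℝ) * θ) * chebPsi' l θ‖ ≤
        ((k:ℝ)⁻¹ * (2 * π) * ((l:ℝ) + 1)) * |π - 0| := by
      apply intervalIntegral.norm_integral_le_of_norm_le_const
      intro θ _
      rw [Real.norm_eq_abs, abs_mul, abs_mul, abs_inv, Nat.abs_cast]
      have h1 := abs_chebPhi_le z ((k:ℝ) * θ)
      have h2 := abs_chebPsi'_le l θ
      have hklpos : (0:ℝ) ≤ (k:ℝ)⁻¹ := inv_nonneg.2 hk0.le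
      apply mul_le_mul
      · apply mul_le_mul le_rfl h1 (abs_nonneg _) hklpos
      · exact h2
      · exact abs_nonneg _
      · positivity
    rw [Real.norm_eq_abs, sub_zero, abs_of_pos hπ] at h
    exact h
  rw [hAeq]
  have heq : (∫ θ in (0:ℝ)..π, (chebH z ((k:ℝ) * θ) - chebM z) * chebPsi l θ) =
      -(∫ θ in (0:ℝ)..π, (k:ℝ)⁻¹ * chebPhi z ((k:ℝ) * θ) * chebPsi' l θ) := by
    linarith [hsplit]
  rw [heq, abs_neg]
  calc |∫ θ in (0:ℝ)..π, (k:ℝ)⁻¹ * chebPhi z ((k:ℝ) * θ) * chebPsi' l θ|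
      ≤ (k:ℝ)⁻¹ * (2 * π) * ((l:ℝ) + 1) * π := hbound
    _ = 2 * π ^ 2 * ((l:ℝ) + 1) / k := by
      field_simp

lemma tendsto_chebA (z : ℝ) (l : ℕ) :
    Tendsto (fun k : ℕ => chebA z k l) atTop (nhds (chebM z * chebI l)) := by
  rw [← tendsto_sub_nhds_zero_iff]
  apply squeeze_zero_norm' (a := fun k : ℕ => 2 * π ^ 2 * ((l:ℝ) + 1) / k)
  · filter_upwards [eventually_ge_atTop 1] with k hk
    rw [Real.norm_eq_abs]
    exact chebA_key z hk l
  · exact tendsto_const_div_atTop_nhds_zero_nat _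


lemma cos_image_Ioo {c : ℝ} (hc0 : 0 ≤ c) (hcπ : c < π) :
    Real.cos '' Ioo c π = Ioo (-1) (Real.cos c) := by
  ext y
  constructor
  · rintro ⟨θ, ⟨h1, h2⟩, rfl⟩
    constructor
    · have := Real.strictAntiOn_cos (a := θ) (b := π) ⟨by linarith, h2.le⟩
        ⟨Real.pi_pos.le, le_rfl⟩ h2
      rwa [Real.cos_pi] at this
    · exact Real.strictAntiOn_cos ⟨hc0, hcπ.le⟩ ⟨by linarith, h2.le⟩ h1
  · rintro ⟨h1, h2⟩
    have hy1 : y ≤ 1 := h2.le.trans (Real.cos_le_one c)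
    refine ⟨Real.arccos y, ⟨?_, ?_⟩, Real.cos_arccos h1.le hy1⟩
    · by_contra hcon
      push_neg at hcon
      have h3 : Real.cos c ≤ Real.cos (Real.arccos y) :=
        Real.cos_le_cos_of_nonneg_of_le_pi (Real.arccos_nonneg y) hcπ.le hcon
      rw [Real.cos_arccos h1.le hy1] at h3
      linarith
    · rcases lt_or_eq_of_le (Real.arccos_le_pi y) with h' | h'
      · exact h'
      · exact absurd (Real.arccos_eq_pi.1 h') (by linarith)

lemma measurable_arcsineDensity : Measurable arcsineDensity := by
  unfold arcsineDensity
  apply Measurable.indicator _ measurableSet_Ioo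
  apply ENNReal.measurable_ofReal.comp
  exact measurable_const.div
    (measurable_const.mul (Real.continuous_sqrt.measurable.comp (by fun_prop)))

lemma arcsine_cdf (z : ℝ) :
    ((volume.withDensity arcsineDensity) (Set.Iic z)).toReal = chebM z := by
  have hπ := Real.pi_pos
  rw [withDensity_apply _ measurableSet_Iic]
  unfold arcsineDensity
  rw [lintegral_indicator measurableSet_Ioo, Measure.restrict_restrict measurableSet_Ioo]
  rcases le_or_gt z (-1) with hz | hz
  · have hemp : Ioo (-1:ℝ) 1 ∩ Iic z = ∅ := by
      ext x
      simp only [mem_inter_iff, mem_Ioo, mem_Iic, mem_empty_iff_false, iff_false]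
      rintro ⟨⟨h1, _⟩, h3⟩
      linarith
    rw [hemp]
    simp only [Measure.restrict_empty, lintegral_zero_measure, ENNReal.toReal_zero]
    have : Real.arccos z = π := Real.arccos_eq_pi.2 hz
    simp only [chebM, this]
    field_simp
    norm_num
  · set b := min z 1 with hb
    have hb1 : -1 < b := lt_min hz (by norm_num)
    have hb2 : b ≤ 1 := min_le_right _ _
    have hae : volume.restrict (Ioo (-1:ℝ) 1 ∩ Iic z) = volume.restrict (Ioo (-1:ℝ) b) := by
      rcases lt_or_ge z 1 with hz1 | hz1
      · have : Ioo (-1:ℝ) 1 ∩ Iic z = Ioc (-1:ℝ) b := by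
          ext x
          simp only [mem_inter_iff, mem_Ioo, mem_Iic, mem_Ioc, hb, le_min_iff]
          constructor
          · rintro ⟨⟨h1, h2⟩, h3⟩; exact ⟨h1, h3, h2.le⟩
          · rintro ⟨h1, h2, h3⟩; exact ⟨⟨h1, lt_of_le_of_lt h2 hz1⟩, h2⟩
        rw [this]
        exact Measure.restrict_congr_set Ioo_ae_eq_Ioc.symm
      · have : Ioo (-1:ℝ) 1 ∩ Iic z = Ioo (-1:ℝ) b := by
          have hb' : b = 1 := min_eq_right hz1
          ext x
          simp only [mem_inter_iff, mem_Ioo, mem_Iic, hb']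
          constructor
          · rintro ⟨⟨h1, h2⟩, _⟩; exact ⟨h1, h2⟩
          · rintro ⟨h1, h2⟩; exact ⟨⟨h1, h2⟩, by linarith⟩
        rw [this]
    rw [hae]
    have htoReal : (∫⁻ x in Ioo (-1:ℝ) b, ENNReal.ofReal (1 / (π * Real.sqrt (1 - x ^ 2)))).toReal
        = ∫ x in Ioo (-1:ℝ) b, 1 / (π * Real.sqrt (1 - x ^ 2)) := by
      rw [MeasureTheory.integral_eq_lintegral_of_nonneg_ae]
      · exact Filter.Eventually.of_forall fun x => by positivity
      · exact (measurable_const.div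
          (measurable_const.mul (Real.continuous_sqrt.measurable.comp
            (by fun_prop : Measurable fun x : ℝ => 1 - x ^ 2)))).aestronglyMeasurable
    rw [htoReal]
    set c := Real.arccos b with hc
    have hc0 : 0 ≤ c := Real.arccos_nonneg b
    have hcπ' : c ≤ π := Real.arccos_le_pi b
    have hcosc : Real.cos c = b := Real.cos_arccos hb1.le hb2
    have hcπ : c < π := by
      rcases lt_or_eq_of_le hcπ' with h | h
      · exact h
      · exact absurd (Real.arccos_eq_pi.1 h) (by linarith)
    have himg : Ioo (-1:ℝ) b = Real.cos '' Ioo c π := by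
      rw [← hcosc] at *
      exact (cos_image_Ioo hc0 hcπ).symm
    rw [himg]
    rw [MeasureTheory.integral_image_eq_integral_abs_deriv_smul measurableSet_Ioo
      (fun θ _ => (Real.hasDerivAt_cos θ).hasDerivWithinAt)
      (Real.injOn_cos.mono fun θ hθ => mem_Icc.mpr ⟨hc0.trans (mem_Ioo.mp hθ).1.le, (mem_Ioo.mp hθ).2.le⟩)]
    have hcongr : ∀ θ ∈ Ioo c π,
        |(-Real.sin θ)| • (1 / (π * Real.sqrt (1 - Real.cos θ ^ 2))) = 1 / π := by
      rintro θ ⟨hθ1, hθ2⟩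
      have hsin : 0 < Real.sin θ :=
        Real.sin_pos_of_pos_of_lt_pi (lt_of_le_of_lt hc0 hθ1) hθ2
      have hsq : 1 - Real.cos θ ^ 2 = Real.sin θ ^ 2 := by
        have := Real.sin_sq_add_cos_sq θ
        linarith
      rw [smul_eq_mul, abs_neg, abs_of_pos hsin, hsq, Real.sqrt_sq hsin.le]
      field_simp
    rw [setIntegral_congr_fun measurableSet_Ioo hcongr]
    rw [setIntegral_const, Real.volume_real_Ioo, max_eq_left (by linarith : (0:ℝ) ≤ π - c)]
    rcases lt_or_ge z 1 with hz1 | hz1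
    · have hbz : b = z := min_eq_left hz1.le
      simp only [chebM, smul_eq_mul, hc, hbz]
      field_simp
    · have hbz : b = 1 := min_eq_right hz1
      have harccos_b : c = 0 := by rw [hc, hbz, Real.arccos_one]
      have harccos_z : Real.arccos z = 0 := Real.arccos_eq_zero.2 hz1
      simp only [chebM, smul_eq_mul, harccos_b, harccos_z]
      field_simp

/-- Main theorem: let `X` be a continuous random variable on `[-1,1]` whose density `f`
has an absolutely convergent Chebyshev series `f x = ∑_{l=0}^∞ μ_l T_l x`. Then as
`k → ∞`, `T_k X` converges in distribution to the random variable `Γ` with the arcsine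
density `1/(π √(1-z²))` on `(-1,1)`: the cdf of `T_k X` converges pointwise to the cdf
of `Γ` (which is continuous everywhere). -/
theorem chebyshev_converges_to_arcsine
    {Ω : Type*} [MeasureSpace Ω] (ℙ : Measure Ω) [IsProbabilityMeasure ℙ]
    (X : Ω → ℝ) (hX : Measurable X)
    (f : ℝ → ℝ) (hf_nonneg : ∀ x, 0 ≤ f x)
    (hf_supp : ∀ x, x ∉ Set.Icc (-1 : ℝ) 1 → f x = 0)
    (hlaw : Measure.map X ℙ = volume.withDensity (fun x => ENNReal.ofReal (f x)))
    (μ : ℕ → ℝ) (habs : Summable fun l => |μ l|)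
    (hexp : ∀ x ∈ Set.Icc (-1 : ℝ) 1,
      HasSum (fun l : ℕ => μ l * (Polynomial.Chebyshev.T ℝ l).eval x) (f x)) :
    ∀ z : ℝ,
      Filter.Tendsto
        (fun k : ℕ =>
          (ℙ {ω | (Polynomial.Chebyshev.T ℝ k).eval (X ω) ≤ z}).toReal)
        Filter.atTop
        (nhds (((volume.withDensity arcsineDensity) (Set.Iic z)).toReal)) := by
  have hπ := Real.pi_pos
  -- measurability of the density
  have hmf : Measurable f := by
    have hfe : f = fun x => Set.indicator (Set.Icc (-1:ℝ) 1)
        (fun x => ∑' l : ℕ, μ l * (Polynomial.Chebyshev.T ℝ l).eval x) x := by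
      funext x
      by_cases hx : x ∈ Set.Icc (-1:ℝ) 1
      · rw [Set.indicator_of_mem hx, (hexp x hx).tsum_eq]
      · rw [Set.indicator_of_notMem hx, hf_supp x hx]
    rw [hfe]
    apply measurable_of_tendsto_metrizable
      (f := fun n x => Set.indicator (Set.Icc (-1:ℝ) 1)
        (fun x => ∑ l ∈ Finset.range n, μ l * (Polynomial.Chebyshev.T ℝ l).eval x) x)
    · intro n
      apply Measurable.indicator _ measurableSet_Icc
      exact (continuous_finset_sum _
        (fun l _ => continuous_const.mul (Polynomial.continuous _))).measurable
    · rw [tendsto_pi_nhds]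
      intro x
      by_cases hx : x ∈ Set.Icc (-1:ℝ) 1
      · simp only [Set.indicator_of_mem hx]
        rw [(hexp x hx).tsum_eq]
        exact (hexp x hx).tendsto_sum_nat
      · simp only [Set.indicator_of_notMem hx]
        exact tendsto_const_nhds
  -- the main computation of the cdf in terms of the Chebyshev data
  have chain : ∀ (z' : ℝ) (k : ℕ),
      (ℙ {ω | (Polynomial.Chebyshev.T ℝ k).eval (X ω) ≤ z'}).toReal
        = ∑' l : ℕ, μ l * chebA z' k l := by
    intro z' k
    have hS : MeasurableSet {x : ℝ | (Polynomial.Chebyshev.T ℝ k).eval x ≤ z'} :=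
      measurableSet_le (Polynomial.continuous _).measurable measurable_const
    have h1 : ℙ {ω | (Polynomial.Chebyshev.T ℝ k).eval (X ω) ≤ z'}
        = Measure.map X ℙ {x | (Polynomial.Chebyshev.T ℝ k).eval x ≤ z'} := by
      rw [Measure.map_apply hX hS]; rfl
    rw [h1, hlaw, withDensity_apply _ hS]
    rw [← MeasureTheory.integral_eq_lintegral_of_nonneg_ae
      (Filter.Eventually.of_forall fun x => hf_nonneg x) hmf.aestronglyMeasurable.restrict]
    have h4 : ∫ x in {x | (Polynomial.Chebyshev.T ℝ k).eval x ≤ z'}, f x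
        = ∫ x in {x | (Polynomial.Chebyshev.T ℝ k).eval x ≤ z'},
            (Set.Ioo (-1:ℝ) 1).indicator f x := by
      apply MeasureTheory.integral_congr_ae
      apply ae_restrict_of_ae
      rw [MeasureTheory.ae_iff]
      have hsub : {x : ℝ | ¬ f x = (Set.Ioo (-1:ℝ) 1).indicator f x} ⊆ ({-1, 1} : Set ℝ) := by
        intro x hx
        simp only [mem_setOf_eq] at hx
        by_contra hx'
        simp only [mem_insert_iff, mem_singleton_iff] at hx'
        push_neg at hx'
        apply hx
        by_cases hmem : x ∈ Set.Ioo (-1:ℝ) 1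
        · rw [Set.indicator_of_mem hmem]
        · rw [Set.indicator_of_notMem hmem, hf_supp x ?_]
          intro hmem2
          rcases hmem2 with ⟨ha, hb⟩
          exact hmem ⟨lt_of_le_of_ne ha (Ne.symm hx'.1), lt_of_le_of_ne hb hx'.2⟩
      exact measure_mono_null hsub
        ((Set.finite_singleton (1:ℝ) |>.insert (-1)).measure_zero volume)
    rw [h4, setIntegral_indicator measurableSet_Ioo, Set.inter_comm,
      ← setIntegral_indicator hS]
    have himg : Set.Ioo (-1:ℝ) 1 = Real.cos '' Set.Ioo 0 π := by
      rw [cos_image_Ioo le_rfl hπ, Real.cos_zero]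
    rw [himg, MeasureTheory.integral_image_eq_integral_abs_deriv_smul measurableSet_Ioo
      (fun θ _ => (Real.hasDerivAt_cos θ).hasDerivWithinAt)
      (Real.injOn_cos.mono fun θ hθ =>
        mem_Icc.mpr ⟨(mem_Ioo.mp hθ).1.le, (mem_Ioo.mp hθ).2.le⟩)]
    have hpt : ∀ θ ∈ Set.Ioo (0:ℝ) π,
        |(-Real.sin θ)| • ({x : ℝ | (Polynomial.Chebyshev.T ℝ k).eval x ≤ z'}.indicator f
          (Real.cos θ))
        = ∑' l : ℕ, μ l * (chebH z' ((k:ℝ)*θ) * chebPsi l θ) := by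
      rintro θ ⟨hθ1, hθ2⟩
      have hsin : 0 < Real.sin θ := Real.sin_pos_of_pos_of_lt_pi hθ1 hθ2
      have hcosIcc : Real.cos θ ∈ Set.Icc (-1:ℝ) 1 :=
        ⟨Real.neg_one_le_cos θ, Real.cos_le_one θ⟩
      have hsum : HasSum (fun l : ℕ => μ l * Real.cos (l * θ)) (f (Real.cos θ)) := by
        have h := hexp _ hcosIcc
        have heval : ∀ l : ℕ, (Polynomial.Chebyshev.T ℝ l).eval (Real.cos θ)
            = Real.cos (l * θ) := by
          intro l
          rw [Polynomial.Chebyshev.T_real_cos]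
          norm_num
        simpa only [heval] using h
      have hHsum : HasSum (fun l : ℕ => μ l * (chebH z' ((k:ℝ)*θ) * chebPsi l θ))
          (f (Real.cos θ) * (chebH z' ((k:ℝ)*θ) * Real.sin θ)) := by
        have h := hsum.mul_right (chebH z' ((k:ℝ)*θ) * Real.sin θ)
        have : (fun l : ℕ => μ l * Real.cos (l * θ) * (chebH z' ((k:ℝ)*θ) * Real.sin θ))
            = fun l : ℕ => μ l * (chebH z' ((k:ℝ)*θ) * chebPsi l θ) := by
          funext l; unfold chebPsi; ring
        rwa [this] at h
      rw [hHsum.tsum_eq]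
      rw [abs_neg, abs_of_pos hsin, smul_eq_mul]
      have hTval : (Polynomial.Chebyshev.T ℝ k).eval (Real.cos θ) = Real.cos ((k:ℝ) * θ) := by
        rw [Polynomial.Chebyshev.T_real_cos]
        norm_num
      by_cases hmem : Real.cos θ ∈ {x : ℝ | (Polynomial.Chebyshev.T ℝ k).eval x ≤ z'}
      · rw [Set.indicator_of_mem hmem]
        have hH : chebH z' ((k:ℝ)*θ) = 1 := by
          apply if_pos
          have := hmem
          simp only [mem_setOf_eq, hTval] at this
          exact this
        rw [hH]; ring
      · rw [Set.indicator_of_notMem hmem]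
        have hH : chebH z' ((k:ℝ)*θ) = 0 := by
          apply if_neg
          simp only [mem_setOf_eq, hTval] at hmem
          exact hmem
        rw [hH]; ring
    rw [setIntegral_congr_fun measurableSet_Ioo hpt]
    rw [MeasureTheory.integral_tsum]
    · apply tsum_congr
      intro l
      rw [MeasureTheory.integral_const_mul]
      congr 1
      rw [show chebA z' k l = ∫ θ in Set.Ioc (0:ℝ) π, chebH z' ((k:ℝ)*θ) * chebPsi l θ from
        intervalIntegral.integral_of_le hπ.le]
      exact setIntegral_congr_set Ioo_ae_eq_Ioc
    · intro l
      exact (measurable_const.mul (((measurable_chebH z').comp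
        (measurable_const_mul (k:ℝ))).mul (continuous_chebPsi l).measurable)).aestronglyMeasurable
    · have hb : ∀ l : ℕ,
          (∫⁻ θ in Set.Ioo (0:ℝ) π, ‖μ l * (chebH z' ((k:ℝ)*θ) * chebPsi l θ)‖₊)
            ≤ ENNReal.ofReal (|μ l| * π) := by
        intro l
        have hptb : ∀ θ : ℝ, (‖μ l * (chebH z' ((k:ℝ)*θ) * chebPsi l θ)‖₊ : ENNReal)
            ≤ ENNReal.ofReal (|μ l|) := by
          intro θ
          rw [← enorm_eq_nnnorm, Real.enorm_eq_ofReal_abs]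
          apply ENNReal.ofReal_le_ofReal
          rw [abs_mul]
          calc |μ l| * |chebH z' ((k:ℝ)*θ) * chebPsi l θ| ≤ |μ l| * 1 :=
              mul_le_mul_of_nonneg_left
                (abs_mul_le_one' (abs_chebH_le _ _) (abs_chebPsi_le _ _)) (abs_nonneg _)
            _ = |μ l| := mul_one _
        calc ∫⁻ θ in Set.Ioo (0:ℝ) π, ‖μ l * (chebH z' ((k:ℝ)*θ) * chebPsi l θ)‖₊
            ≤ ∫⁻ _ in Set.Ioo (0:ℝ) π, ENNReal.ofReal (|μ l|) := lintegral_mono fun θ => hptb θ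
          _ = ENNReal.ofReal (|μ l|) * volume (Set.Ioo (0:ℝ) π) := setLIntegral_const _ _
          _ = ENNReal.ofReal (|μ l|) * ENNReal.ofReal π := by
              rw [Real.volume_Ioo, sub_zero]
          _ = ENNReal.ofReal (|μ l| * π) := by
              rw [← ENNReal.ofReal_mul (abs_nonneg _)]
      apply ne_top_of_le_ne_top (b := ENNReal.ofReal (∑' l : ℕ, |μ l| * π))
      · exact ENNReal.ofReal_ne_top
      · calc ∑' l : ℕ, ∫⁻ θ in Set.Ioo (0:ℝ) π, ‖μ l * (chebH z' ((k:ℝ)*θ) * chebPsi l θ)‖₊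
            ≤ ∑' l : ℕ, ENNReal.ofReal (|μ l| * π) := ENNReal.tsum_le_tsum hb
          _ = ENNReal.ofReal (∑' l : ℕ, |μ l| * π) :=
              (ENNReal.ofReal_tsum_of_nonneg (fun l => by positivity)
                (habs.mul_right π)).symm
  -- total mass : ∑' μ l * I l = 1
  have hone : ∑' l : ℕ, μ l * chebI l = 1 := by
    have h2 := chain 2 0
    have hset : {ω | (Polynomial.Chebyshev.T ℝ (0:ℕ)).eval (X ω) ≤ (2:ℝ)} = Set.univ := by
      ext ω
      simp only [Nat.cast_zero, Polynomial.Chebyshev.T_zero, Polynomial.eval_one,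
        mem_setOf_eq, mem_univ, iff_true]
      norm_num
    rw [hset, measure_univ, ENNReal.toReal_one] at h2
    have hA : ∀ l, chebA 2 0 l = chebI l := by
      intro l
      unfold chebA chebI
      apply intervalIntegral.integral_congr
      intro θ _
      show chebH 2 (((0:ℕ):ℝ) * θ) * chebPsi l θ = chebPsi l θ
      rw [show chebH 2 (((0:ℕ):ℝ) * θ) = 1 from
        if_pos (by linarith [Real.cos_le_one (((0:ℕ):ℝ) * θ)]), one_mul]
    calc ∑' l : ℕ, μ l * chebI l = ∑' l : ℕ, μ l * chebA 2 0 l :=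
        tsum_congr fun l => by rw [hA l]
      _ = 1 := h2.symm
  -- conclusion
  intro z
  rw [arcsine_cdf z]
  rw [show (fun k : ℕ => (ℙ {ω | (Polynomial.Chebyshev.T ℝ k).eval (X ω) ≤ z}).toReal)
      = fun k : ℕ => ∑' l : ℕ, μ l * chebA z k l from funext fun k => chain z k]
  have hlim : Tendsto (fun k : ℕ => ∑' l : ℕ, μ l * chebA z k l) atTop
      (nhds (∑' l : ℕ, μ l * (chebM z * chebI l))) := by
    apply tendsto_tsum_of_dominated_convergence (bound := fun l : ℕ => |μ l| * π)
      (habs.mul_right π)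
    · exact fun l => (tendsto_chebA z l).const_mul (μ l)
    · apply Filter.Eventually.of_forall
      intro k l
      rw [Real.norm_eq_abs, abs_mul]
      exact mul_le_mul_of_nonneg_left (abs_chebA_le z k l) (abs_nonneg _)
  have hval : (∑' l : ℕ, μ l * (chebM z * chebI l)) = chebM z := by
    calc ∑' l : ℕ, μ l * (chebM z * chebI l) = ∑' l : ℕ, chebM z * (μ l * chebI l) :=
        tsum_congr fun l => by ring
      _ = chebM z * ∑' l : ℕ, μ l * chebI l := tsum_mul_left
      _ = chebM z := by rw [hone, mul_one]
  rwa [hval] at hlim
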